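/- The relative neighborhood graph of any finite set of points in the plane (with pairwise distinct distances) is connected. -/

import Mathlib

noncomputable section
open Classical

abbrev Pt := EuclideanSpace ℝ (Fin 2)

/-- The relative neighborhood graph of a finite point set `V`. -/
def rng (V : Finset Pt) : SimpleGraph Pt where
  Adj u v := u ≠ v ∧ u ∈ V ∧ v ∈ V ∧
    ∀ w ∈ V, w ≠ u → w ≠ v → ¬ (dist u w < dist u v ∧ dist v w < dist u v)
  symm := by
    refine ⟨?_⟩
    rintro u v ⟨h1, h2, h3, h4⟩
    refine ⟨h1.symm, h3, h2, fun w hw hwv hwu h => ?_⟩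
    rw [dist_comm v u] at h
    exact h4 w hw hwu hwv ⟨h.2, h.1⟩
  loopless := ⟨fun u h => h.1 rfl⟩

/-- General position: all pairwise distances between points of `V` are distinct. -/
def GenPos (V : Finset Pt) : Prop :=
  ∀ u v x y : Pt, u ∈ V → v ∈ V → x ∈ V → y ∈ V → u ≠ v → x ≠ y →
    s(u, v) ≠ s(x, y) → dist u v ≠ dist x y

/-- The relative neighborhood graph of a nonempty finite point set with
pairwise distinct distances is connected. -/
theorem stmt_5 (V : Finset Pt) (hgp : GenPos V) (hne : V.Nonempty) :
    ((rng V).induce (V : Set Pt)).Connected := by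
  have key : ∀ n : ℕ, ∀ u v : (V : Set Pt),
      ((V ×ˢ V).filter (fun p => dist p.1 p.2 < dist (u : Pt) (v : Pt))).card ≤ n →
      ((rng V).induce (V : Set Pt)).Reachable u v := by
    intro n
    induction n with
    | zero =>
      intro u v hcard
      by_cases huv : (u : Pt) = (v : Pt)
      · have : u = v := Subtype.ext huv
        subst this; exact SimpleGraph.Reachable.refl u
      · refine SimpleGraph.Adj.reachable ?_
        show (rng V).Adj u v
        refine ⟨huv, u.2, v.2, ?_⟩
        rintro w hw hwu hwv ⟨h1, h2⟩
        have hmem : ((u : Pt), w) ∈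
            (V ×ˢ V).filter (fun p => dist p.1 p.2 < dist (u : Pt) (v : Pt)) := by
          simp [Finset.mem_filter, Finset.mem_product, u.2, hw, h1]
        have := Finset.card_pos.mpr ⟨_, hmem⟩
        omega
    | succ m ih =>
      intro u v hcard
      by_cases huv : (u : Pt) = (v : Pt)
      · have : u = v := Subtype.ext huv
        subst this; exact SimpleGraph.Reachable.refl u
      by_cases hblock : ∃ w ∈ V, w ≠ (u : Pt) ∧ w ≠ (v : Pt) ∧
          dist (u : Pt) w < dist (u : Pt) (v : Pt) ∧
          dist (v : Pt) w < dist (u : Pt) (v : Pt)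
      · obtain ⟨w, hw, hwu, hwv, h1, h2⟩ := hblock
        set S := (V ×ˢ V).filter (fun p => dist p.1 p.2 < dist (u : Pt) (v : Pt)) with hS
        have huw : ((rng V).induce (V : Set Pt)).Reachable u ⟨w, hw⟩ := by
          apply ih
          show ((V ×ˢ V).filter (fun p => dist p.1 p.2 < dist (u : Pt) w)).card ≤ m
          have hsub : (V ×ˢ V).filter (fun p => dist p.1 p.2 < dist (u : Pt) w) ⊂ S := by
            constructor
            · intro p hp
              rw [Finset.mem_filter] at hp ⊢
              exact ⟨hp.1, hp.2.trans h1⟩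
            · intro hc
              have : ((u : Pt), w) ∈ S := by
                rw [hS, Finset.mem_filter]
                exact ⟨Finset.mem_product.mpr ⟨u.2, hw⟩, h1⟩
              have := hc this
              rw [Finset.mem_filter] at this
              exact lt_irrefl _ this.2
          have := Finset.card_lt_card hsub
          omega
        have hwv' : ((rng V).induce (V : Set Pt)).Reachable ⟨w, hw⟩ v := by
          apply ih
          show ((V ×ˢ V).filter (fun p => dist p.1 p.2 < dist w (v : Pt))).card ≤ m
          have hsub : (V ×ˢ V).filter (fun p => dist p.1 p.2 < dist w (v : Pt)) ⊂ S := by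
            constructor
            · intro p hp
              rw [Finset.mem_filter] at hp ⊢
              refine ⟨hp.1, hp.2.trans ?_⟩
              rwa [dist_comm] at h2
            · intro hc
              have : ((v : Pt), w) ∈ S := by
                rw [hS, Finset.mem_filter]
                exact ⟨Finset.mem_product.mpr ⟨v.2, hw⟩, h2⟩
              have := hc this
              rw [Finset.mem_filter] at this
              rw [dist_comm] at this
              exact lt_irrefl _ this.2
          have := Finset.card_lt_card hsub
          omega
        exact huw.trans hwv'
      · refine SimpleGraph.Adj.reachable ?_
        show (rng V).Adj u v
        refine ⟨huv, u.2, v.2, ?_⟩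
        rintro w hw hwu hwv ⟨h1, h2⟩
        exact hblock ⟨w, hw, hwu, hwv, h1, h2⟩
  have hpre : ((rng V).induce (V : Set Pt)).Preconnected := by
    intro u v
    exact key _ u v le_rfl
  obtain ⟨x, hx⟩ := hne
  rw [SimpleGraph.connected_iff]
  exact ⟨hpre, ⟨⟨x, hx⟩⟩⟩
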